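/- For finite samples x_1,…,x_m and y_1,…,y_m and any bounded measurable f, (1/m)∑_i log σ(f(x_i)) + (1/m)∑_j log(1-σ(f(y_j))) ≤ log σ((1/m)∑_i f(x_i) − (1/m)∑_j f(y_j)). -/

import Mathlib

open MeasureTheory

noncomputable def logisticSigmoid (x : ℝ) : ℝ := Real.exp x / (1 + Real.exp x)

lemma one_add_exp_pos (t : ℝ) : 0 < 1 + Real.exp t := by positivity

lemma log_sigmoid_eq (t : ℝ) :
    Real.log (logisticSigmoid t) = t - Real.log (1 + Real.exp t) := by
  unfold logisticSigmoid
  rw [Real.log_div (Real.exp_ne_zero t) (one_add_exp_pos t).ne', Real.log_exp]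

lemma one_sub_sigmoid (t : ℝ) : 1 - logisticSigmoid t = logisticSigmoid (-t) := by
  unfold logisticSigmoid
  rw [Real.exp_neg]
  have h := (one_add_exp_pos t).ne'
  field_simp
  ring

lemma softplus_hasDeriv (t : ℝ) :
    HasDerivAt (fun x => Real.log (1 + Real.exp x)) (logisticSigmoid t) t := by
  have h : HasDerivAt (fun x => 1 + Real.exp x) (Real.exp t) t :=
    (Real.hasDerivAt_exp t).const_add 1
  simpa [logisticSigmoid, div_eq_mul_inv, mul_comm] using h.log (one_add_exp_pos t).ne'

lemma sigmoid_hasDeriv (t : ℝ) :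
    HasDerivAt logisticSigmoid (Real.exp t / (1 + Real.exp t) ^ 2) t := by
  have h : HasDerivAt (fun x => 1 + Real.exp x) (Real.exp t) t :=
    (Real.hasDerivAt_exp t).const_add 1
  have := (Real.hasDerivAt_exp t).div h (one_add_exp_pos t).ne'
  exact this.congr_deriv (by rw [div_left_inj' (by positivity)]; ring)

lemma softplus_convex : ConvexOn ℝ Set.univ (fun x => Real.log (1 + Real.exp x)) := by
  have hd : deriv (fun x => Real.log (1 + Real.exp x)) = logisticSigmoid := by
    ext t; exact (softplus_hasDeriv t).deriv
  apply convexOn_univ_of_deriv2_nonneg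
  · exact fun t => (softplus_hasDeriv t).differentiableAt
  · rw [hd]; exact fun t => (sigmoid_hasDeriv t).differentiableAt
  · intro t
    simp only [Function.iterate_succ, Function.iterate_zero, Function.comp_apply, id_eq, hd]
    rw [(sigmoid_hasDeriv t).deriv]
    positivity

lemma log_sigmoid_concave : ConcaveOn ℝ Set.univ (fun x => Real.log (logisticSigmoid x)) := by
  have : (fun x => Real.log (logisticSigmoid x))
      = (fun x : ℝ => x) + (fun x => -Real.log (1 + Real.exp x)) := by
    ext t; simp [log_sigmoid_eq, sub_eq_add_neg]
  rw [this]
  exact (concaveOn_id convex_univ).add softplus_convex.neg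

lemma log_sigmoid_superadd (u v : ℝ) :
    Real.log (logisticSigmoid u) + Real.log (logisticSigmoid v)
      ≤ Real.log (logisticSigmoid (u + v)) := by
  rw [log_sigmoid_eq, log_sigmoid_eq, log_sigmoid_eq, Real.exp_add]
  have h : Real.log (1 + Real.exp u * Real.exp v)
      ≤ Real.log ((1 + Real.exp u) * (1 + Real.exp v)) := by
    apply Real.log_le_log (by positivity)
    nlinarith [Real.exp_pos u, Real.exp_pos v]
  rw [Real.log_mul (one_add_exp_pos u).ne' (one_add_exp_pos v).ne'] at h
  linarith

lemma jensen_log_sigmoid (m : ℕ) (hm : 0 < m) (a : Fin m → ℝ) :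
    (1 / (m : ℝ)) * ∑ i, Real.log (logisticSigmoid (a i))
      ≤ Real.log (logisticSigmoid ((1 / (m : ℝ)) * ∑ i, a i)) := by
  have hmne : (m : ℝ) ≠ 0 := Nat.cast_ne_zero.mpr hm.ne'
  have := log_sigmoid_concave.le_map_sum (t := Finset.univ) (w := fun _ : Fin m => 1 / (m : ℝ))
    (p := a) (fun i _ => by positivity)
    (by simp [Finset.sum_const]; field_simp) (fun i _ => Set.mem_univ _)
  simpa [smul_eq_mul, Finset.mul_sum] using this

theorem mean_embedding_upper_bound_finite
    {𝒳 : Type*} [MeasurableSpace 𝒳]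
    (m : ℕ) (hm : 0 < m) (x y : Fin m → 𝒳)
    (f : 𝒳 → ℝ) (hf : Measurable f) (M : ℝ) (hM : ∀ t, |f t| ≤ M) :
    (1 / (m : ℝ)) * ∑ i, Real.log (logisticSigmoid (f (x i))) +
      (1 / (m : ℝ)) * ∑ j, Real.log (1 - logisticSigmoid (f (y j))) ≤
    Real.log (logisticSigmoid
      ((1 / (m : ℝ)) * ∑ i, f (x i) - (1 / (m : ℝ)) * ∑ j, f (y j))) := by
  simp only [one_sub_sigmoid]
  have h1 := jensen_log_sigmoid m hm (fun i => f (x i))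
  have h2 := jensen_log_sigmoid m hm (fun j => -f (y j))
  have h3 := log_sigmoid_superadd ((1 / (m : ℝ)) * ∑ i, f (x i))
    ((1 / (m : ℝ)) * ∑ j, -f (y j))
  have he : (1 / (m : ℝ)) * ∑ i, f (x i) + (1 / (m : ℝ)) * ∑ j, -f (y j)
      = (1 / (m : ℝ)) * ∑ i, f (x i) - (1 / (m : ℝ)) * ∑ j, f (y j) := by
    rw [Finset.sum_neg_distrib]; ring
  rw [he] at h3
  calc _ ≤ Real.log (logisticSigmoid ((1 / (m : ℝ)) * ∑ i, f (x i)))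
          + Real.log (logisticSigmoid ((1 / (m : ℝ)) * ∑ j, -f (y j))) := by
        exact add_le_add h1 h2
    _ ≤ _ := h3
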